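/- Let μ be a probability measure on [0,1] with cumulative distribution function F(u) := μ[0,u], let λ be the uniform (Lebesgue) probability measure on [0,1], and let N ≥ 1. Then the probability that the minimum of N i.i.d. samples from μ strictly exceeds the minimum of N independent i.i.d. uniform samples satisfies μ^{⊗N} ⊗ λ^{⊗N}{((x₁,…,x_N),(u₁,…,u_N)) : min_i x_i > min_j u_j} = N·∫₀¹ (1 − F(u))^N · (1−u)^{N−1} du. -/

import Mathlib

open MeasureTheory Set ENNReal

private lemma lt_iInf_fin {N : ℕ} [Nonempty (Fin N)] (x : Fin N → ℝ) (t : ℝ) :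
    t < ⨅ i, x i ↔ ∀ i, t < x i := by
  constructor
  · intro h i
    exact h.trans_le (ciInf_le (Set.finite_range x).bddBelow i)
  · intro h
    obtain ⟨i, hi⟩ := exists_eq_ciInf_of_finite (f := x)
    rw [← hi]; exact h i

/-- the key interval integral computation -/
private lemma key_int {N : ℕ} (hN : 1 ≤ N) {a : ℝ} (ha0 : 0 ≤ a) (ha1 : a ≤ 1) :
    ∫⁻ t in Icc (0:ℝ) a, ENNReal.ofReal ((N:ℝ) * (1-t)^(N-1))
      = ENNReal.ofReal (1 - (1-a)^N) := by
  have hcont : Continuous (fun t : ℝ => (N:ℝ) * (1-t)^(N-1)) := by fun_prop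
  have hint : IntegrableOn (fun t : ℝ => (N:ℝ) * (1-t)^(N-1)) (Icc 0 a) volume :=
    hcont.integrableOn_Icc
  have hnn : 0 ≤ᵐ[volume.restrict (Icc (0:ℝ) a)] fun t : ℝ => (N:ℝ) * (1-t)^(N-1) := by
    filter_upwards [ae_restrict_mem measurableSet_Icc] with t ht
    have h1 : (0:ℝ) ≤ 1 - t := by linarith [ht.2]
    positivity
  rw [← ofReal_integral_eq_lintegral_ofReal hint hnn]
  congr 1
  rw [integral_Icc_eq_integral_Ioc, ← intervalIntegral.integral_of_le ha0,
    intervalIntegral.integral_const_mul]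
  have hsub : (∫ t in (0:ℝ)..a, (1-t)^(N-1)) = ∫ x in (1-a)..(1:ℝ), x^(N-1) := by
    simpa using intervalIntegral.integral_comp_sub_left (fun s : ℝ => s ^ (N-1)) 1 (a := 0) (b := a)
  rw [hsub, integral_pow, Nat.sub_add_cancel hN]
  have hNne : (N:ℝ) ≠ 0 := by positivity
  field_simp
  rw [one_pow, Nat.cast_sub hN, Nat.cast_one]
  ring

/-- Let `μ` be a probability measure on `[0,1]` with CDF `F(u) = μ[0,u]`,
and `λ` the uniform measure on `[0,1]`. The probability that the minimum of `N` i.i.d.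
samples from `μ` strictly exceeds the minimum of `N` independent uniform samples equals
`N·∫₀¹ (1 − F(u))^N (1−u)^{N−1} du`. -/
theorem stmt_19 (μ : Measure ℝ) [IsProbabilityMeasure μ]
    (hsupp : μ (Set.Icc (0 : ℝ) 1) = 1)
    (F : ℝ → ℝ) (hF : ∀ u, F u = (μ (Set.Icc 0 u)).toReal)
    (N : ℕ) (hN : 1 ≤ N) :
    (((Measure.pi fun _ : Fin N => μ).prod
        (Measure.pi fun _ : Fin N => volume.restrict (Set.Icc (0 : ℝ) 1)))
        {p : (Fin N → ℝ) × (Fin N → ℝ) | (⨅ j, p.2 j) < ⨅ i, p.1 i}).toReal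
      = N * ∫ u in (0 : ℝ)..1, (1 - F u) ^ N * (1 - u) ^ (N - 1) := by
  haveI : Nonempty (Fin N) := ⟨⟨0, hN⟩⟩
  set ν : Measure ℝ := volume.restrict (Set.Icc (0:ℝ) 1) with hνdef
  haveI hνprob : IsProbabilityMeasure ν :=
    ⟨by rw [hνdef, Measure.restrict_apply MeasurableSet.univ, Set.univ_inter, Real.volume_Icc]
        norm_num⟩
  set P : Measure (Fin N → ℝ) := Measure.pi fun _ : Fin N => μ with hPdef
  set Λ : Measure (Fin N → ℝ) := Measure.pi fun _ : Fin N => ν with hΛdef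
  -- measurability of the min map
  have hm : Measurable (fun u : Fin N → ℝ => ⨅ j, u j) :=
    Measurable.iInf (fun i => measurable_pi_apply i)
  have hs : MeasurableSet {p : (Fin N → ℝ) × (Fin N → ℝ) | (⨅ j, p.2 j) < ⨅ i, p.1 i} :=
    measurableSet_lt (hm.comp measurable_snd) (hm.comp measurable_fst)
  -- slices
  have hslice : ∀ t : ℝ, {x : Fin N → ℝ | t < ⨅ i, x i} = Set.pi Set.univ (fun _ => Set.Ioi t) := by
    intro t; ext x; simp [lt_iInf_fin, Set.mem_pi]
  have hPslice : ∀ t : ℝ, P {x : Fin N → ℝ | t < ⨅ i, x i} = μ (Set.Ioi t) ^ N := by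
    intro t
    rw [hPdef, hslice t, Measure.pi_pi]
    simp
  have hΛslice : ∀ t : ℝ, Λ {x : Fin N → ℝ | t < ⨅ i, x i} = ν (Set.Ioi t) ^ N := by
    intro t
    rw [hΛdef, hslice t, Measure.pi_pi]
    simp
  -- the antitone function g
  set g : ℝ → ℝ≥0∞ := fun t => μ (Set.Ioi t) ^ N with hgdef
  have hganti : Antitone (fun t : ℝ => μ (Set.Ioi t)) := fun s t hst =>
    measure_mono (Set.Ioi_subset_Ioi hst)
  have hgmeas : Measurable g := hganti.measurable.pow_const N
  -- Fubini
  have hfub : (P.prod Λ) {p : (Fin N → ℝ) × (Fin N → ℝ) | (⨅ j, p.2 j) < ⨅ i, p.1 i}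
      = ∫⁻ u, g (⨅ j, u j) ∂Λ := by
    rw [Measure.prod_apply_symm hs]
    refine lintegral_congr fun u => ?_
    have : ((fun x : Fin N → ℝ => (x, u)) ⁻¹' {p : (Fin N → ℝ) × (Fin N → ℝ) |
        (⨅ j, p.2 j) < ⨅ i, p.1 i}) = {x : Fin N → ℝ | (⨅ j, u j) < ⨅ i, x i} := rfl
    rw [this, hPslice]
  -- pushforward of Λ under min
  set ρ : Measure ℝ := Λ.map (fun u : Fin N → ℝ => ⨅ j, u j) with hρdef
  haveI : IsProbabilityMeasure ρ := Measure.isProbabilityMeasure_map hm.aemeasurable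
  set d : ℝ → ℝ≥0∞ := fun t => ENNReal.ofReal ((N:ℝ) * (1-t)^(N-1)) with hddef
  have hdmeas : Measurable d := by
    have : Continuous (fun t : ℝ => (N:ℝ) * (1-t)^(N-1)) := by fun_prop
    exact (ENNReal.measurable_ofReal.comp this.measurable)
  have hρσ : ρ = ν.withDensity d := by
    refine Measure.ext_of_Iic ρ (ν.withDensity d) (fun a => ?_)
    -- left side
    have hL : ρ (Iic a) = 1 - ν (Set.Ioi a) ^ N := by
      rw [hρdef, Measure.map_apply hm measurableSet_Iic]
      have hpre : (fun u : Fin N → ℝ => ⨅ j, u j) ⁻¹' Iic a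
          = {x : Fin N → ℝ | a < ⨅ i, x i}ᶜ := by
        ext u; simp [not_lt]
      have hmset : MeasurableSet {x : Fin N → ℝ | a < ⨅ i, x i} :=
        measurableSet_lt measurable_const hm
      rw [hpre, measure_compl hmset (measure_ne_top _ _), measure_univ, hΛslice]
    have hR : (ν.withDensity d) (Iic a) = ∫⁻ t in Iic a ∩ Icc (0:ℝ) 1, d t ∂volume := by
      rw [withDensity_apply d measurableSet_Iic, hνdef,
        Measure.restrict_restrict measurableSet_Iic]
    rw [hL, hR]
    have hνIoi : ν (Set.Ioi a) = volume (Set.Ioi a ∩ Icc (0:ℝ) 1) := by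
      rw [hνdef, Measure.restrict_apply measurableSet_Ioi]
    rcases lt_or_ge a 0 with ha | ha0
    · -- a < 0
      have h1 : Iic a ∩ Icc (0:ℝ) 1 = ∅ := by
        ext t; simp only [mem_inter_iff, mem_Iic, mem_Icc, mem_empty_iff_false, iff_false]
        rintro ⟨h1, h2, _⟩; linarith
      have h2 : Set.Ioi a ∩ Icc (0:ℝ) 1 = Icc (0:ℝ) 1 := by
        ext t; simp only [mem_inter_iff, mem_Ioi, mem_Icc]
        constructor
        · rintro ⟨_, h⟩; exact h
        · rintro ⟨h1, h2⟩; exact ⟨by linarith, h1, h2⟩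
      rw [h1, hνIoi, h2, Real.volume_Icc]
      simp
    rcases le_or_gt a 1 with ha1 | ha1
    · -- 0 ≤ a ≤ 1
      have h1 : Iic a ∩ Icc (0:ℝ) 1 = Icc (0:ℝ) a := by
        ext t; simp only [mem_inter_iff, mem_Iic, mem_Icc]
        constructor
        · rintro ⟨h1, h2, _⟩; exact ⟨h2, h1⟩
        · rintro ⟨h1, h2⟩; exact ⟨h2, h1, by linarith⟩
      have h2 : Set.Ioi a ∩ Icc (0:ℝ) 1 = Ioc a 1 := by
        ext t; simp only [mem_inter_iff, mem_Ioi, mem_Icc, mem_Ioc]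
        constructor
        · rintro ⟨h1, _, h3⟩; exact ⟨h1, h3⟩
        · rintro ⟨h1, h2⟩; exact ⟨h1, by linarith, h2⟩
      rw [h1, key_int hN ha0 ha1, hνIoi, h2, Real.volume_Ioc,
        ← ENNReal.ofReal_pow (by linarith), ← ENNReal.ofReal_one,
        ← ENNReal.ofReal_sub _ (pow_nonneg (by linarith) N)]
    · -- 1 < a
      have h1 : Iic a ∩ Icc (0:ℝ) 1 = Icc (0:ℝ) 1 := by
        ext t; simp only [mem_inter_iff, mem_Iic, mem_Icc]
        constructor
        · rintro ⟨_, h⟩; exact h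
        · rintro ⟨h1, h2⟩; exact ⟨by linarith, h1, h2⟩
      have h2 : Set.Ioi a ∩ Icc (0:ℝ) 1 = ∅ := by
        ext t; simp only [mem_inter_iff, mem_Ioi, mem_Icc, mem_empty_iff_false, iff_false]
        rintro ⟨h1, _, h3⟩; linarith
      rw [h1, key_int hN zero_le_one le_rfl, hνIoi, h2]
      simp [zero_pow (by omega : N ≠ 0)]
  -- now rewrite the integral
  have hmain : (P.prod Λ) {p : (Fin N → ℝ) × (Fin N → ℝ) | (⨅ j, p.2 j) < ⨅ i, p.1 i}
      = ∫⁻ t in Icc (0:ℝ) 1, d t * g t ∂volume := by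
    rw [hfub, ← lintegral_map hgmeas hm, ← hρdef, hρσ,
      lintegral_withDensity_eq_lintegral_mul ν hdmeas hgmeas, hνdef]
    rfl
  -- CDF facts
  have hFmono : Monotone F := by
    intro s t hst
    rw [hF, hF]
    exact ENNReal.toReal_mono (measure_ne_top _ _) (measure_mono (Icc_subset_Icc le_rfl hst))
  have hFmeas : Measurable F := hFmono.measurable
  have hout : μ (Set.Icc (0:ℝ) 1)ᶜ = 0 := by
    rw [measure_compl measurableSet_Icc (measure_ne_top _ _), measure_univ, hsupp]
    simp
  have hF01 : ∀ t, 0 ≤ F t ∧ F t ≤ 1 := by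
    intro t
    constructor
    · rw [hF]; exact ENNReal.toReal_nonneg
    · rw [hF]
      calc (μ (Set.Icc 0 t)).toReal ≤ (1:ℝ≥0∞).toReal :=
            ENNReal.toReal_mono one_ne_top prob_le_one
        _ = 1 := by simp
  have hIoi : ∀ t : ℝ, 0 ≤ t → μ (Set.Ioi t) = ENNReal.ofReal (1 - F t) := by
    intro t ht
    have hIic : μ (Iic t) = μ (Icc 0 t) := by
      refine le_antisymm ?_ (measure_mono Icc_subset_Iic_self)
      have hsub : Iic t ⊆ Iio 0 ∪ Icc 0 t := by
        intro x hx
        rcases lt_or_ge x 0 with h | h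
        · exact Or.inl h
        · exact Or.inr ⟨h, hx⟩
      calc μ (Iic t) ≤ μ (Iio 0 ∪ Icc 0 t) := measure_mono hsub
        _ ≤ μ (Iio 0) + μ (Icc 0 t) := measure_union_le _ _
        _ = μ (Icc 0 t) := by
            rw [measure_mono_null (fun x hx => ?_) hout, zero_add]
            simp only [mem_compl_iff, mem_Icc, not_and, not_le]
            intro h; exact absurd h (not_le.mpr hx)
    have : μ (Set.Ioi t) = 1 - μ (Iic t) := by
      rw [← Set.compl_Iic, measure_compl measurableSet_Iic (measure_ne_top _ _), measure_univ]
    rw [this, hIic]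
    have hμofReal : μ (Icc 0 t) = ENNReal.ofReal (F t) := by
      rw [hF]; exact (ENNReal.ofReal_toReal (measure_ne_top _ _)).symm
    rw [hμofReal, ← ENNReal.ofReal_one, ← ENNReal.ofReal_sub _ (hF01 t).1]
  -- final computation
  set h : ℝ → ℝ := fun t => (N:ℝ) * (1-t)^(N-1) * (1 - F t)^N with hhdef
  have hae : ∀ᵐ t ∂(volume.restrict (Icc (0:ℝ) 1)), d t * g t = ENNReal.ofReal (h t) := by
    filter_upwards [ae_restrict_mem measurableSet_Icc] with t ht
    have h1 : (0:ℝ) ≤ 1 - t := by linarith [ht.2]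
    rw [hgdef, hddef, hhdef]
    simp only
    rw [hIoi t ht.1, ← ENNReal.ofReal_pow (by linarith [(hF01 t).2]),
      ← ENNReal.ofReal_mul (by positivity)]
  have hmeash : Measurable h := by
    apply Measurable.mul
    · fun_prop
    · exact (measurable_const.sub hFmeas).pow_const N
  have hnn : 0 ≤ᵐ[volume.restrict (Icc (0:ℝ) 1)] h := by
    filter_upwards [ae_restrict_mem measurableSet_Icc] with t ht
    have h1 : (0:ℝ) ≤ 1 - t := by linarith [ht.2]
    have h2 : (0:ℝ) ≤ 1 - F t := by linarith [(hF01 t).2]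
    rw [hhdef]
    positivity
  have hreal : ∫ t in Icc (0:ℝ) 1, h t
      = ((P.prod Λ) {p : (Fin N → ℝ) × (Fin N → ℝ) | (⨅ j, p.2 j) < ⨅ i, p.1 i}).toReal := by
    rw [integral_eq_lintegral_of_nonneg_ae hnn hmeash.aestronglyMeasurable, hmain]
    congr 1
    exact (lintegral_congr_ae hae).symm
  rw [← hreal, integral_Icc_eq_integral_Ioc, ← intervalIntegral.integral_of_le zero_le_one,
    ← intervalIntegral.integral_const_mul]
  apply intervalIntegral.integral_congr
  intro t _
  rw [hhdef]
  ring
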